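/- Let n ≥ 1. The game n·(*2) + * (the disjunctive sum of n copies of the Nim-heap *2 together with one copy of *) is a misère N-position, i.e. it is not a misère P-position. -/

import Mathlib

universe u

/-! `SetTheory.PGame` and the games `nim`, `star` have been removed from Mathlib; they are
reproduced here with their former (Mathlib, December 2024) definitions. -/

/-- Pre-games (as formerly in Mathlib's `SetTheory.PGame`). -/
inductive SetTheory.PGame : Type (u + 1)
  | mk : ∀ α β : Type u, (α → SetTheory.PGame) → (β → SetTheory.PGame) → SetTheory.PGame

namespace SetTheory.PGame

/-- The pre-game `0` with no moves. -/
instance : Zero PGame.{u} :=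
  ⟨⟨PEmpty, PEmpty, PEmpty.elim, PEmpty.elim⟩⟩

/-- The disjunctive sum of pre-games. -/
noncomputable instance : Add PGame.{u} :=
  ⟨fun x y => by
    induction x generalizing y with | mk xl xr _ _ IHxl IHxr => _
    induction y with | mk yl yr yL yR IHyl IHyr => _
    have y := mk yl yr yL yR
    refine ⟨xl ⊕ yl, xr ⊕ yr, Sum.rec ?_ ?_, Sum.rec ?_ ?_⟩
    · exact fun i => IHxl i y
    · exact fun i => IHyl i
    · exact fun i => IHxr i y
    · exact fun i => IHyr i⟩

/-- The pre-game `star`, whose only options are `0`. -/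
def star : PGame.{u} :=
  ⟨PUnit, PUnit, fun _ => 0, fun _ => 0⟩

/-- The nim game of an ordinal `o`: both players may move to `nim a` for any `a < o`. -/
noncomputable def nim (o : Ordinal.{u}) : PGame.{u} :=
  ⟨o.ToType, o.ToType,
    fun x => nim (Ordinal.typein (α := o.ToType) (· < ·) x),
    fun x => nim (Ordinal.typein (α := o.ToType) (· < ·) x)⟩
termination_by o
decreasing_by all_goals exact Ordinal.typein_lt_self x

end SetTheory.PGame

open SetTheory PGame

/-- `G` is a misère P-position: `G` has at least one option and every option of `G` is a
misère N-position (i.e. not a misère P-position).  In particular the empty game `0` is a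
misère N-position.  (For an impartial game the options are the left moves.) -/
def MisereP : PGame → Prop
  | PGame.mk l _ L _ => Nonempty l ∧ ∀ i, ¬ MisereP (L i)

/-- `copies n G` is the disjunctive sum `n · G` of `n` copies of `G`. -/
noncomputable def copies : ℕ → PGame → PGame
  | 0, _ => 0
  | n + 1, G => copies n G + G

namespace SetTheory.PGame

/-- The type of left moves. -/
def LeftMoves : PGame.{u} → Type u
  | mk l _ _ _ => l

/-- The type of right moves. -/
def RightMoves : PGame.{u} → Type u
  | mk _ r _ _ => r

/-- The left move function. -/
def moveLeft : ∀ g : PGame.{u}, LeftMoves g → PGame.{u}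
  | mk _ _ L _ => L

/-- The right move function. -/
def moveRight : ∀ g : PGame.{u}, RightMoves g → PGame.{u}
  | mk _ _ _ R => R

/-- Relabellings of pre-games. -/
inductive Relabelling : PGame.{u} → PGame.{u} → Type (u + 1)
  | mk : ∀ {x y : PGame} (L : x.LeftMoves ≃ y.LeftMoves) (R : x.RightMoves ≃ y.RightMoves),
      (∀ i, Relabelling (x.moveLeft i) (y.moveLeft (L i))) →
        (∀ j, Relabelling (x.moveRight j) (y.moveRight (R j))) → Relabelling x y

end SetTheory.PGame

infixl:50 " ≡r " => SetTheory.PGame.Relabelling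

namespace SetTheory.PGame

instance isEmpty_zero_leftMoves : IsEmpty (LeftMoves 0) := ⟨fun x : PEmpty => x.elim⟩

instance isEmpty_zero_rightMoves : IsEmpty (RightMoves 0) := ⟨fun x : PEmpty => x.elim⟩

instance uniqueStarLeftMoves : Unique (LeftMoves star) := PUnit.instUnique

instance uniqueStarRightMoves : Unique (RightMoves star) := PUnit.instUnique

theorem star_moveLeft (x) : star.moveLeft x = 0 := rfl

theorem leftMoves_add : ∀ x y : PGame.{u}, (x + y).LeftMoves = (x.LeftMoves ⊕ y.LeftMoves)
  | ⟨_, _, _, _⟩, ⟨_, _, _, _⟩ => rfl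

instance isEmpty_leftMoves_add (x y : PGame.{u}) [IsEmpty x.LeftMoves] [IsEmpty y.LeftMoves] :
    IsEmpty (x + y).LeftMoves := by
  rw [leftMoves_add]; infer_instance

/-- Converts a left move of a sum. -/
def toLeftMovesAdd {x y : PGame} : x.LeftMoves ⊕ y.LeftMoves ≃ (x + y).LeftMoves :=
  Equiv.cast (leftMoves_add x y).symm

theorem add_moveLeft_inl {x : PGame} (y : PGame) (i) :
    (x + y).moveLeft (toLeftMovesAdd (Sum.inl i)) = x.moveLeft i + y := by
  cases x; cases y; rfl

theorem add_moveLeft_inr (x : PGame) {y : PGame} (i) :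
    (x + y).moveLeft (toLeftMovesAdd (Sum.inr i)) = x + y.moveLeft i := by
  cases x; cases y; rfl

theorem leftMoves_add_cases {x y : PGame} (k) {P : (x + y).LeftMoves → Prop}
    (hl : ∀ i, P <| toLeftMovesAdd (Sum.inl i)) (hr : ∀ i, P <| toLeftMovesAdd (Sum.inr i)) :
    P k := by
  rw [← toLeftMovesAdd.apply_symm_apply k]
  rcases toLeftMovesAdd.symm k with i | i
  · exact hl i
  · exact hr i

/-- Reflexivity of relabelling. -/
noncomputable def Relabelling.refl : ∀ x : PGame.{u}, x ≡r x
  | PGame.mk _ _ L R => ⟨Equiv.refl _, Equiv.refl _, fun i => Relabelling.refl (L i),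
      fun j => Relabelling.refl (R j)⟩

/-- Alternative constructor. -/
noncomputable def Relabelling.mk' {x y : PGame} (L : y.LeftMoves ≃ x.LeftMoves)
    (R : y.RightMoves ≃ x.RightMoves) (hL : ∀ i, x.moveLeft (L i) ≡r y.moveLeft i)
    (hR : ∀ j, x.moveRight (R j) ≡r y.moveRight j) : x ≡r y :=
  ⟨L.symm, R.symm, fun i => by have h := hL (L.symm i); rwa [L.apply_symm_apply] at h,
    fun j => by have h := hR (R.symm j); rwa [R.apply_symm_apply] at h⟩

/-- Symmetry of relabelling. -/
noncomputable def Relabelling.symm {x y : PGame.{u}} (r : x ≡r y) : y ≡r x := by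
  induction r with
  | mk L R _ _ ihL ihR => exact Relabelling.mk' L R ihL ihR

/-- Transitivity of relabelling. -/
noncomputable def Relabelling.trans {x y z : PGame.{u}} (r₁ : x ≡r y) (r₂ : y ≡r z) : x ≡r z := by
  induction r₁ generalizing z with
  | mk L₁ R₁ _ _ ih₁ ih₂ =>
    cases r₂ with
    | mk L₂ R₂ hL₂ hR₂ =>
      exact ⟨L₁.trans L₂, R₁.trans R₂, fun i => ih₁ i (hL₂ _), fun j => ih₂ j (hR₂ _)⟩

/-- Sums respect relabellings. -/
noncomputable def Relabelling.addCongr {w x y z : PGame.{u}} (h₁ : w ≡r x) (h₂ : y ≡r z) :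
    w + y ≡r x + z := by
  induction w generalizing x y z with
  | mk wl wr wL wR ihwL ihwR =>
  induction y generalizing x z with
  | mk yl yr yL yR ihyL ihyR =>
  cases x with
  | mk xl xr xL xR =>
  cases z with
  | mk zl zr zL zR =>
  cases h₁ with
  | mk L₁ R₁ hL₁ hR₁ =>
  cases h₂ with
  | mk L₂ R₂ hL₂ hR₂ =>
  refine ⟨Equiv.sumCongr L₁ L₂, Equiv.sumCongr R₁ R₂, ?_, ?_⟩ <;> rintro (i | j)
  · exact ihwL i (hL₁ i) ⟨L₂, R₂, hL₂, hR₂⟩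
  · exact ihyL j ⟨L₁, R₁, hL₁, hR₁⟩ (hL₂ j)
  · exact ihwR i (hR₁ i) ⟨L₂, R₂, hL₂, hR₂⟩
  · exact ihyR j ⟨L₁, R₁, hL₁, hR₁⟩ (hR₂ j)

/-- `x + 0` is a relabelling of `x`. -/
noncomputable def addZeroRelabelling (x : PGame.{u}) : x + 0 ≡r x := by
  induction x with
  | mk xl xr xL xR ihL ihR =>
    refine ⟨Equiv.sumEmpty xl PEmpty, Equiv.sumEmpty xr PEmpty, fun k => ?_, fun k => ?_⟩
    · rcases k with i | i
      · exact ihL i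
      · exact i.elim
    · rcases k with i | i
      · exact ihR i
      · exact i.elim

/-- `0 + x` is a relabelling of `x`. -/
noncomputable def zeroAddRelabelling (x : PGame.{u}) : 0 + x ≡r x := by
  induction x with
  | mk xl xr xL xR ihL ihR =>
    refine ⟨Equiv.emptySum PEmpty xl, Equiv.emptySum PEmpty xr, fun k => ?_, fun k => ?_⟩
    · rcases k with i | i
      · exact i.elim
      · exact ihL i
    · rcases k with i | i
      · exact i.elim
      · exact ihR i

/-- Commutativity of sums up to relabelling. -/
noncomputable def addCommRelabelling (x y : PGame.{u}) : x + y ≡r y + x := by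
  induction x generalizing y with
  | mk xl xr xL xR ihxL ihxR =>
  induction y with
  | mk yl yr yL yR ihyL ihyR =>
  refine ⟨Equiv.sumComm _ _, Equiv.sumComm _ _, ?_, ?_⟩ <;> rintro (i | j)
  · exact ihxL i _
  · exact ihyL j
  · exact ihxR i _
  · exact ihyR j

/-- Associativity of sums up to relabelling. -/
noncomputable def addAssocRelabelling (x y z : PGame.{u}) : x + y + z ≡r x + (y + z) := by
  induction x generalizing y z with
  | mk xl xr xL xR ihxL ihxR =>
  induction y generalizing z with
  | mk yl yr yL yR ihyL ihyR =>
  induction z with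
  | mk zl zr zL zR ihzL ihzR =>
  refine ⟨Equiv.sumAssoc _ _ _, Equiv.sumAssoc _ _ _, ?_, ?_⟩
  · rintro ((i | i) | i)
    · exact ihxL i _ _
    · exact ihyL i _
    · exact ihzL i
  · rintro ((i | i) | i)
    · exact ihxR i _ _
    · exact ihyR i _
    · exact ihzR i

theorem leftMoves_nim (o : Ordinal) : (nim o).LeftMoves = o.ToType := by rw [nim]; rfl

theorem rightMoves_nim (o : Ordinal) : (nim o).RightMoves = o.ToType := by rw [nim]; rfl

theorem moveLeft_nim_hEq (o : Ordinal) :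
    HEq (nim o).moveLeft fun i : o.ToType => nim (Ordinal.typein (α := o.ToType) (· < ·) i) := by
  rw [nim]; rfl

theorem moveRight_nim_hEq (o : Ordinal) :
    HEq (nim o).moveRight fun i : o.ToType => nim (Ordinal.typein (α := o.ToType) (· < ·) i) := by
  rw [nim]; rfl

/-- Left moves of `nim o`. -/
noncomputable def toLeftMovesNim {o : Ordinal} : Set.Iio o ≃ (nim o).LeftMoves :=
  (Ordinal.ToType.mk (o := o)).toEquiv.trans (Equiv.cast (leftMoves_nim o).symm)

/-- Right moves of `nim o`. -/
noncomputable def toRightMovesNim {o : Ordinal} : Set.Iio o ≃ (nim o).RightMoves :=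
  (Ordinal.ToType.mk (o := o)).toEquiv.trans (Equiv.cast (rightMoves_nim o).symm)

theorem toLeftMovesNim_symm_lt {o : Ordinal} (i : (nim o).LeftMoves) :
    ↑(toLeftMovesNim.symm i) < o :=
  (toLeftMovesNim.symm i).prop

theorem toRightMovesNim_symm_lt {o : Ordinal} (i : (nim o).RightMoves) :
    ↑(toRightMovesNim.symm i) < o :=
  (toRightMovesNim.symm i).prop

theorem moveLeft_nim' {o : Ordinal.{u}} (i) :
    (nim o).moveLeft i = nim (toLeftMovesNim.symm i).val :=
  (congr_heq (moveLeft_nim_hEq o).symm (cast_heq _ i)).symm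

theorem moveRight_nim' {o : Ordinal.{u}} (i) :
    (nim o).moveRight i = nim (toRightMovesNim.symm i).val :=
  (congr_heq (moveRight_nim_hEq o).symm (cast_heq _ i)).symm

theorem moveLeft_nim {o : Ordinal} (i) : (nim o).moveLeft (toLeftMovesNim i) = nim i := by
  rw [moveLeft_nim', Equiv.symm_apply_apply]

instance isEmpty_nim_zero_leftMoves : IsEmpty (nim 0).LeftMoves := by
  rw [leftMoves_nim]; infer_instance

instance isEmpty_nim_zero_rightMoves : IsEmpty (nim 0).RightMoves := by
  rw [rightMoves_nim]; infer_instance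

/-- `nim 0` is a relabelling of `0`. -/
noncomputable def nimZeroRelabelling : nim 0 ≡r 0 :=
  ⟨Equiv.equivOfIsEmpty _ _, Equiv.equivOfIsEmpty _ _, isEmptyElim, isEmptyElim⟩

/-- `nim 1` is a relabelling of `star`. -/
noncomputable def nimOneRelabelling : nim 1 ≡r star := by
  refine ⟨(Equiv.cast (leftMoves_nim 1)).trans (Equiv.ofUnique _ _),
    (Equiv.cast (rightMoves_nim 1)).trans (Equiv.ofUnique _ _), fun i => ?_, fun j => ?_⟩
  · rw [moveLeft_nim', Ordinal.lt_one_iff_zero.mp (toLeftMovesNim_symm_lt i)]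
    exact nimZeroRelabelling
  · rw [moveRight_nim', Ordinal.lt_one_iff_zero.mp (toRightMovesNim_symm_lt j)]
    exact nimZeroRelabelling

end SetTheory.PGame

theorem misereP_iff (x : PGame) :
    MisereP x ↔ Nonempty x.LeftMoves ∧ ∀ i, ¬ MisereP (x.moveLeft i) := by
  cases x
  rw [MisereP]
  rfl

theorem misereP_congr : ∀ {x y : PGame}, x ≡r y → (MisereP x ↔ MisereP y) := by
  intro x y r
  induction r with
  | mk L R hL hR ihL ihR =>
    rw [misereP_iff, misereP_iff]
    constructor
    · rintro ⟨⟨i⟩, h⟩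
      refine ⟨⟨L i⟩, fun j => ?_⟩
      have := (ihL (L.symm j))
      rw [L.apply_symm_apply] at this
      rw [← this]
      exact h _
    · rintro ⟨⟨j⟩, h⟩
      refine ⟨⟨L.symm j⟩, fun i => ?_⟩
      rw [ihL i]
      exact h _

theorem copies_moveLeft (X : PGame) :
    ∀ (a : ℕ) (i : (copies (a + 1) X).LeftMoves),
      ∃ j : X.LeftMoves,
        Nonempty ((copies (a + 1) X).moveLeft i ≡r copies a X + X.moveLeft j) := by
  intro a
  induction a with
  | zero =>
      intro i
      refine leftMoves_add_cases (x := copies 0 X) (y := X)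
        (P := fun k => ∃ j, Nonempty ((copies 0 X + X).moveLeft k ≡r copies 0 X + X.moveLeft j))
        i (fun i => ?_) (fun j => ?_)
      · exact isEmptyElim (show (0 : PGame).LeftMoves from i)
      · rw [add_moveLeft_inr]
        exact ⟨j, ⟨Relabelling.refl _⟩⟩
  | succ a ih =>
      intro i
      refine leftMoves_add_cases (x := copies (a + 1) X) (y := X)
        (P := fun k => ∃ j, Nonempty ((copies (a + 1) X + X).moveLeft k ≡r
          copies (a + 1) X + X.moveLeft j))
        i (fun i => ?_) (fun j => ?_)
      · obtain ⟨j, ⟨r⟩⟩ := ih i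
        refine ⟨j, ⟨?_⟩⟩
        show (copies (a + 1) X + X).moveLeft (toLeftMovesAdd (Sum.inl i)) ≡r _
        rw [add_moveLeft_inl]
        exact ((r.addCongr (Relabelling.refl X)).trans
          (addAssocRelabelling _ _ _)).trans
          ((((Relabelling.refl _).addCongr (addCommRelabelling _ _)).trans
            (addAssocRelabelling _ _ _).symm))
      · rw [add_moveLeft_inr]
        exact ⟨j, ⟨Relabelling.refl _⟩⟩

theorem ordinal_one_lt_two : (1 : Ordinal.{0}) < 2 := by
  rw [← one_add_one_eq_two, Ordinal.add_one_eq_succ]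
  exact Order.lt_succ 1

theorem ordinal_zero_lt_two : (0 : Ordinal.{0}) < 2 :=
  lt_trans zero_lt_one ordinal_one_lt_two

theorem nim_two_moveLeft (i : (nim (2 : Ordinal.{0})).LeftMoves) :
    Nonempty ((nim 2).moveLeft i ≡r 0) ∨ Nonempty ((nim 2).moveLeft i ≡r star) := by
  rw [moveLeft_nim']
  have h : (toLeftMovesNim.symm i).val < 2 := toLeftMovesNim_symm_lt i
  have h1 : (toLeftMovesNim.symm i).val ≤ 1 := by
    refine Order.lt_succ_iff.mp ?_
    rw [← Ordinal.add_one_eq_succ, one_add_one_eq_two]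
    exact h
  rcases Ordinal.le_one_iff.mp h1 with h0 | h0 <;> rw [h0]
  · exact Or.inl ⟨nimZeroRelabelling⟩
  · exact Or.inr ⟨nimOneRelabelling⟩

theorem exists_nim_two_moveLeft_zero :
    ∃ i, Nonempty ((nim (2 : Ordinal.{0})).moveLeft i ≡r 0) :=
  ⟨toLeftMovesNim ⟨0, ordinal_zero_lt_two⟩, ⟨by
    rw [moveLeft_nim]
    exact nimZeroRelabelling⟩⟩

theorem exists_nim_two_moveLeft_star :
    ∃ i, Nonempty ((nim (2 : Ordinal.{0})).moveLeft i ≡r star) :=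
  ⟨toLeftMovesNim ⟨1, ordinal_one_lt_two⟩, ⟨by
    rw [moveLeft_nim]
    exact nimOneRelabelling⟩⟩

/-- `rep a b` is `a` copies of `*2` plus `b` copies of `*`. -/
noncomputable def rep (a b : ℕ) : PGame :=
  copies a (nim (2 : Ordinal.{0})) + copies b star

theorem rep_moveLeft (a b : ℕ) (i : (rep a b).LeftMoves) :
    (∃ a', a = a' + 1 ∧ (Nonempty ((rep a b).moveLeft i ≡r rep a' b) ∨
        Nonempty ((rep a b).moveLeft i ≡r rep a' (b + 1)))) ∨
    (∃ b', b = b' + 1 ∧ Nonempty ((rep a b).moveLeft i ≡r rep a b')) := by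
  refine leftMoves_add_cases (x := copies a (nim 2)) (y := copies b star)
    (P := fun k => (∃ a', a = a' + 1 ∧ (Nonempty ((rep a b).moveLeft k ≡r rep a' b) ∨
        Nonempty ((rep a b).moveLeft k ≡r rep a' (b + 1)))) ∨
      (∃ b', b = b' + 1 ∧ Nonempty ((rep a b).moveLeft k ≡r rep a b')))
    i (fun i => ?_) (fun i => ?_)
  · cases a with
    | zero => exact isEmptyElim (show (0 : PGame).LeftMoves from i)
    | succ a' =>
        obtain ⟨j, ⟨r⟩⟩ := copies_moveLeft (nim 2) a' i
        refine Or.inl ⟨a', rfl, ?_⟩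
        rcases nim_two_moveLeft j with hs | hs
        · obtain ⟨s⟩ := hs
          refine Or.inl ⟨?_⟩
          show (copies (a' + 1) (nim 2) + copies b star).moveLeft
            (toLeftMovesAdd (Sum.inl i)) ≡r rep a' b
          rw [add_moveLeft_inl]
          exact (r.addCongr (Relabelling.refl _)).trans
            ((((Relabelling.refl _).addCongr s).trans
              (addZeroRelabelling _)).addCongr (Relabelling.refl _))
        · obtain ⟨s⟩ := hs
          refine Or.inr ⟨?_⟩
          show (copies (a' + 1) (nim 2) + copies b star).moveLeft
            (toLeftMovesAdd (Sum.inl i)) ≡r rep a' (b + 1)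
          rw [add_moveLeft_inl]
          exact (((r.addCongr (Relabelling.refl _)).trans
            ((((Relabelling.refl _).addCongr s)).addCongr (Relabelling.refl _))).trans
              (addAssocRelabelling _ _ _)).trans
              ((Relabelling.refl _).addCongr (addCommRelabelling _ _))
  · cases b with
    | zero => exact isEmptyElim (show (0 : PGame).LeftMoves from i)
    | succ b' =>
        obtain ⟨j, ⟨r⟩⟩ := copies_moveLeft star b' i
        rw [star_moveLeft] at r
        refine Or.inr ⟨b', rfl, ⟨?_⟩⟩
        show (copies a (nim 2) + copies (b' + 1) star).moveLeft
          (toLeftMovesAdd (Sum.inr i)) ≡r rep a b'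
        rw [add_moveLeft_inr]
        exact (Relabelling.refl _).addCongr (r.trans (addZeroRelabelling _))

theorem rep_exists_move_A (a b : ℕ) :
    ∃ i, Nonempty ((rep (a + 1) b).moveLeft i ≡r rep a b) := by
  obtain ⟨i0, ⟨s⟩⟩ := exists_nim_two_moveLeft_zero
  refine ⟨toLeftMovesAdd (Sum.inl (toLeftMovesAdd (Sum.inr i0))), ⟨?_⟩⟩
  show (copies (a + 1) (nim 2) + copies b star).moveLeft
    (toLeftMovesAdd (Sum.inl (toLeftMovesAdd (Sum.inr i0)))) ≡r rep a b
  erw [add_moveLeft_inl]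
  have e : (copies (a + 1) (nim 2)).moveLeft (toLeftMovesAdd (Sum.inr i0)) =
      copies a (nim 2) + (nim 2).moveLeft i0 := add_moveLeft_inr _ i0
  rw [e]
  exact (((Relabelling.refl _).addCongr s).trans
    (addZeroRelabelling _)).addCongr (Relabelling.refl _)

theorem rep_exists_move_B (a b : ℕ) :
    ∃ i, Nonempty ((rep (a + 1) b).moveLeft i ≡r rep a (b + 1)) := by
  obtain ⟨i0, ⟨s⟩⟩ := exists_nim_two_moveLeft_star
  refine ⟨toLeftMovesAdd (Sum.inl (toLeftMovesAdd (Sum.inr i0))), ⟨?_⟩⟩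
  show (copies (a + 1) (nim 2) + copies b star).moveLeft
    (toLeftMovesAdd (Sum.inl (toLeftMovesAdd (Sum.inr i0)))) ≡r rep a (b + 1)
  erw [add_moveLeft_inl]
  have e : (copies (a + 1) (nim 2)).moveLeft (toLeftMovesAdd (Sum.inr i0)) =
      copies a (nim 2) + (nim 2).moveLeft i0 := add_moveLeft_inr _ i0
  rw [e]
  exact (((((Relabelling.refl _).addCongr s).addCongr (Relabelling.refl _))).trans
    (addAssocRelabelling _ _ _)).trans
    ((Relabelling.refl _).addCongr (addCommRelabelling _ _))

theorem rep_exists_move_C (a b : ℕ) :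
    ∃ i, Nonempty ((rep a (b + 1)).moveLeft i ≡r rep a b) := by
  refine ⟨toLeftMovesAdd (Sum.inr (toLeftMovesAdd (Sum.inr default))), ⟨?_⟩⟩
  show (copies a (nim 2) + copies (b + 1) star).moveLeft
    (toLeftMovesAdd (Sum.inr (toLeftMovesAdd (Sum.inr default)))) ≡r rep a b
  erw [add_moveLeft_inr]
  have e : (copies (b + 1) star).moveLeft (toLeftMovesAdd (Sum.inr default)) =
      copies b star + star.moveLeft default := add_moveLeft_inr _ default
  rw [e, star_moveLeft]
  exact (Relabelling.refl _).addCongr (addZeroRelabelling _)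

theorem rep_misereP : ∀ (N a b : ℕ), 2 * a + b ≤ N →
    (MisereP (rep a b) ↔ (a = 0 ∧ b % 2 = 1) ∨ (0 < a ∧ a % 2 = 0 ∧ b % 2 = 0)) := by
  intro N
  induction N with
  | zero =>
      intro a b h
      obtain rfl : a = 0 := by omega
      obtain rfl : b = 0 := by omega
      constructor
      · intro hP
        rw [misereP_iff] at hP
        exact isEmptyElim (show ((0 : PGame) + (0 : PGame)).LeftMoves from hP.1.some)
      · rintro (⟨_, h⟩ | ⟨h, _⟩) <;> omega
  | succ N ih =>
      intro a b hN
      constructor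
      · intro hP
        by_contra hc
        rw [misereP_iff] at hP
        obtain ⟨hne, hall⟩ := hP
        rcases Nat.eq_zero_or_pos a with rfl | ha
        · rcases Nat.eq_zero_or_pos b with rfl | hb
          · exact isEmptyElim (show ((0 : PGame) + (0 : PGame)).LeftMoves from hne.some)
          · have hb2 : b % 2 = 0 := by
              rcases Nat.mod_two_eq_zero_or_one b with h | h
              · exact h
              · exact absurd (Or.inl ⟨rfl, h⟩) hc
            obtain ⟨b', rfl⟩ : ∃ b', b = b' + 1 := ⟨b - 1, by omega⟩
            obtain ⟨i, ⟨r⟩⟩ := rep_exists_move_C 0 b'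
            refine hall i ?_
            rw [misereP_congr r, ih 0 b' (by omega)]
            exact Or.inl ⟨rfl, by omega⟩
        · rcases Nat.mod_two_eq_zero_or_one a with ha2 | ha2
          · have hb2 : b % 2 = 1 := by
              rcases Nat.mod_two_eq_zero_or_one b with h | h
              · exact absurd (Or.inr ⟨ha, ha2, h⟩) hc
              · exact h
            obtain ⟨b', rfl⟩ : ∃ b', b = b' + 1 := ⟨b - 1, by omega⟩
            obtain ⟨i, ⟨r⟩⟩ := rep_exists_move_C a b'
            refine hall i ?_
            rw [misereP_congr r, ih a b' (by omega)]
            exact Or.inr ⟨ha, ha2, by omega⟩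
          · obtain ⟨a', rfl⟩ : ∃ a', a = a' + 1 := ⟨a - 1, by omega⟩
            have ha' : a' % 2 = 0 := by omega
            rcases Nat.eq_zero_or_pos a' with rfl | ha'pos
            · rcases Nat.mod_two_eq_zero_or_one b with hb2 | hb2
              · obtain ⟨i, ⟨r⟩⟩ := rep_exists_move_B 0 b
                refine hall i ?_
                rw [misereP_congr r, ih 0 (b + 1) (by omega)]
                exact Or.inl ⟨rfl, by omega⟩
              · obtain ⟨i, ⟨r⟩⟩ := rep_exists_move_A 0 b
                refine hall i ?_
                rw [misereP_congr r, ih 0 b (by omega)]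
                exact Or.inl ⟨rfl, hb2⟩
            · rcases Nat.mod_two_eq_zero_or_one b with hb2 | hb2
              · obtain ⟨i, ⟨r⟩⟩ := rep_exists_move_A a' b
                refine hall i ?_
                rw [misereP_congr r, ih a' b (by omega)]
                exact Or.inr ⟨ha'pos, ha', hb2⟩
              · obtain ⟨i, ⟨r⟩⟩ := rep_exists_move_B a' b
                refine hall i ?_
                rw [misereP_congr r, ih a' (b + 1) (by omega)]
                exact Or.inr ⟨ha'pos, ha', by omega⟩
      · intro hc
        rw [misereP_iff]
        constructor
        · rcases hc with ⟨rfl, hb⟩ | ⟨ha, _, _⟩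
          · obtain ⟨b', rfl⟩ : ∃ b', b = b' + 1 := ⟨b - 1, by omega⟩
            obtain ⟨i, -⟩ := rep_exists_move_C 0 b'
            exact ⟨i⟩
          · obtain ⟨a', rfl⟩ : ∃ a', a = a' + 1 := ⟨a - 1, by omega⟩
            obtain ⟨i, -⟩ := rep_exists_move_A a' b
            exact ⟨i⟩
        · intro i hPi
          rcases rep_moveLeft a b i with ⟨a', rfl, hr⟩ | ⟨b', rfl, ⟨r⟩⟩
          · have h2 : (a' + 1) % 2 = 0 ∧ b % 2 = 0 := by
              rcases hc with ⟨h, _⟩ | ⟨_, h1, h2⟩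
              · omega
              · exact ⟨h1, h2⟩
            obtain ⟨h2a, h2b⟩ := h2
            rcases hr with h | h
            · obtain ⟨r⟩ := h
              rw [misereP_congr r, ih a' b (by omega)] at hPi
              rcases hPi with ⟨h3, h4⟩ | ⟨h3, h4, h5⟩ <;> omega
            · obtain ⟨r⟩ := h
              rw [misereP_congr r, ih a' (b + 1) (by omega)] at hPi
              rcases hPi with ⟨h3, h4⟩ | ⟨h3, h4, h5⟩ <;> omega
          · rw [misereP_congr r, ih a b' (by omega)] at hPi
            rcases hc with ⟨h1, h2⟩ | ⟨h1, h2, h3⟩ <;>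
              rcases hPi with ⟨h4, h5⟩ | ⟨h4, h5, h6⟩ <;> omega

/-- For `n ≥ 1`, the game `n·(*2) + *` (the sum of `n` copies of the Nim-heap `*2`
together with one copy of `*`, the game whose only option is `0`) is a misère
N-position, i.e. not a misère P-position. -/
theorem copies_star2_add_star_misere_N (n : ℕ) (hn : 1 ≤ n) :
    ¬ MisereP (copies n (nim (2 : Ordinal.{0})) + star) := by
  have r : (copies n (nim (2 : Ordinal.{0})) + star) ≡r rep n 1 :=
    (Relabelling.refl _).addCongr (zeroAddRelabelling star).symm
  rw [misereP_congr r, rep_misereP (2 * n + 1) n 1 le_rfl]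
  rintro (⟨rfl, _⟩ | ⟨_, _, h⟩) <;> omega
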